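/- Suppose f : ℝ → ℝ is convex with argmin f = [x_l, x_r], and f(x_r + δ) = f(x_r) + λδ^k + o(δ^k) as δ ↓ 0 for some λ > 0, k > 1. Then for every C > 1 there is ε₀ > 0 such that for all ε ∈ (0, ε₀): x_r + (ε/(Cλk))^{1/(k-1)} ≤ inf ∂f*(ε) ≤ sup ∂f*(ε) ≤ x_r + (Cε/λ)^{1/(k-1)}. -/

import Mathlib

noncomputable section
open Set Filter

/-- The Fenchel conjugate `f*(y) = sup_x (y·x - f(x))`, valued in `EReal`. -/
def fstarE (f : ℝ → ℝ) (y : ℝ) : EReal :=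
  ⨆ x : ℝ, ((y * x - f x : ℝ) : EReal)

/-- The subdifferential of an `EReal`-valued function at `y`. -/
def subderivE (F : ℝ → EReal) (y : ℝ) : Set ℝ :=
  {x | ∀ z, F y + ((x * (z - y) : ℝ) : EReal) ≤ F z}

/-- The set of (global) minimizers of `f : ℝ → ℝ`. -/
def argminSet (f : ℝ → ℝ) : Set ℝ := {x | ∀ z, f x ≤ f z}

open Topology

lemma exists_subgrad (f : ℝ → ℝ) (hf : ConvexOn ℝ Set.univ f) (x : ℝ) :
    ∃ s : ℝ, ∀ y, f x + s * (y - x) ≤ f y := by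
  set A : Set ℝ := (fun y => (f x - f y) / (x - y)) '' Iio x with hA
  have hne : A.Nonempty := ⟨(f x - f (x - 1)) / (x - (x - 1)), ⟨x - 1, by simp, rfl⟩⟩
  have key : ∀ y ∈ Iio x, ∀ z, x < z → (f x - f y) / (x - y) ≤ (f z - f x) / (z - x) := by
    intro y hy z hz
    have := hf.slope_mono_adjacent (mem_univ y) (mem_univ z) hy hz
    convert this using 2 <;> ring
  have hbdd : BddAbove A := by
    refine ⟨(f (x + 1) - f x) / (x + 1 - x), ?_⟩
    rintro m ⟨y, hy, rfl⟩
    exact key y hy (x + 1) (by linarith)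
  set s := sSup A with hs
  refine ⟨s, fun y => ?_⟩
  rcases lt_trichotomy y x with h | h | h
  · have h1 : (f x - f y) / (x - y) ≤ s := le_csSup hbdd ⟨y, h, rfl⟩
    have h2 : 0 < x - y := by linarith
    rw [div_le_iff₀ h2] at h1
    nlinarith
  · simp [h]
  · have h1 : s ≤ (f y - f x) / (y - x) := csSup_le hne (by rintro m ⟨z, hz, rfl⟩; exact key z hz y h)
    have h2 : 0 < y - x := by linarith
    rw [le_div_iff₀ h2] at h1
    nlinarith

lemma fstar_eq (f : ℝ → ℝ) {s x : ℝ} (hs : ∀ y, f x + s * (y - x) ≤ f y) :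
    fstarE f s = ((s * x - f x : ℝ) : EReal) := by
  apply le_antisymm
  · refine iSup_le fun y => ?_
    refine EReal.coe_le_coe_iff.mpr ?_
    have := hs y; nlinarith
  · exact le_iSup (fun y => ((s * y - f y : ℝ) : EReal)) x

lemma mem_subderiv_iff (f : ℝ → ℝ) (hf : ConvexOn ℝ Set.univ f) (ε x : ℝ) :
    x ∈ subderivE (fstarE f) ε ↔ ∀ y, f x + ε * (y - x) ≤ f y := by
  constructor
  · intro hx y
    obtain ⟨s, hs⟩ := exists_subgrad f hf x
    have h1 : fstarE f ε + ((x * (s - ε) : ℝ) : EReal) ≤ ((s * x - f x : ℝ) : EReal) := by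
      rw [← fstar_eq f hs]; exact hx s
    have h2 : ((ε * y - f y : ℝ) : EReal) ≤ fstarE f ε := by
      unfold fstarE; exact le_iSup (fun t : ℝ => ((ε * t - f t : ℝ) : EReal)) y
    have h3 : ((ε * y - f y : ℝ) : EReal) + ((x * (s - ε) : ℝ) : EReal)
        ≤ ((s * x - f x : ℝ) : EReal) := le_trans (add_le_add_left h2 _) h1
    rw [← EReal.coe_add] at h3
    have := EReal.coe_le_coe_iff.mp h3
    linarith
  · intro hx z
    rw [fstar_eq f hx, ← EReal.coe_add]
    have h2 : ((z * x - f x : ℝ) : EReal) ≤ fstarE f z := by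
      unfold fstarE; exact le_iSup (fun t : ℝ => ((z * t - f t : ℝ) : EReal)) x
    refine le_trans (le_of_eq ?_) h2
    norm_cast
    ring


set_option maxHeartbeats 1000000 in
/-- If `f` is convex with `argmin f = [x_l, x_r]` and `f(x_r + δ) = f(x_r) + λ δ^k + o(δ^k)`
as `δ ↓ 0` with `λ > 0`, `k > 1`, then for every `C > 1` there is `ε₀ > 0` such that for all
`ε ∈ (0, ε₀)`:
`x_r + (ε/(Cλk))^{1/(k-1)} ≤ inf ∂f*(ε) ≤ sup ∂f*(ε) ≤ x_r + (Cε/λ)^{1/(k-1)}`. -/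
theorem conjugate_subdifferential_growth (f : ℝ → ℝ) (hconv : ConvexOn ℝ Set.univ f)
    (xl xr : ℝ) (hxlr : xl ≤ xr) (hargmin : argminSet f = Icc xl xr)
    (lam k : ℝ) (hlam : 0 < lam) (hk : 1 < k)
    (hgrowth : Tendsto (fun δ : ℝ => (f (xr + δ) - f xr - lam * δ ^ k) / δ ^ k)
      (nhdsWithin 0 (Ioi 0)) (nhds 0)) :
    ∀ C : ℝ, 1 < C → ∃ ε₀ > 0, ∀ ε ∈ Ioo 0 ε₀,
      xr + (ε / (C * lam * k)) ^ (1 / (k - 1)) ≤ sInf (subderivE (fstarE f) ε) ∧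
      sInf (subderivE (fstarE f) ε) ≤ sSup (subderivE (fstarE f) ε) ∧
      sSup (subderivE (fstarE f) ε) ≤ xr + (C * ε / lam) ^ (1 / (k - 1)) := by
  intro C hC
  have hk0 : (0:ℝ) < k := lt_trans one_pos hk
  have hk1 : (0:ℝ) < k - 1 := by linarith
  have hC0 : (0:ℝ) < C := lt_trans one_pos hC
  have hfmin : ∀ z, f xr ≤ f z := by
    have : xr ∈ argminSet f := by rw [hargmin]; exact ⟨hxlr, le_refl xr⟩
    exact this
  -- choose τ > 1 with (τ^k - 1)/(τ - 1) < C * k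
  have hderiv : HasDerivAt (fun t : ℝ => t ^ k) (k * (1:ℝ) ^ (k - 1)) 1 :=
    Real.hasDerivAt_rpow_const (Or.inl one_ne_zero)
  have hslope : Tendsto (slope (fun t : ℝ => t ^ k) 1) (𝓝[≠] 1) (𝓝 k) := by
    have := hasDerivAt_iff_tendsto_slope.mp hderiv
    simpa using this
  have hlt : ∀ᶠ τ in 𝓝[≠] (1:ℝ), slope (fun t : ℝ => t ^ k) 1 τ < C * k :=
    hslope.eventually_lt_const (by nlinarith)
  have hmem : ∀ᶠ τ in 𝓝[>] (1:ℝ), slope (fun t : ℝ => t ^ k) 1 τ < C * k :=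
    hlt.filter_mono (nhdsWithin_mono _ (fun t ht => ne_of_gt ht))
  obtain ⟨τ, hτs, hτ1⟩ := (hmem.and self_mem_nhdsWithin).exists
  rw [slope_def_field, Real.one_rpow] at hτs
  have hτ1' : (1:ℝ) < τ := hτ1
  have hτ0 : (0:ℝ) < τ := by linarith
  have hτk1 : (1:ℝ) < τ ^ k := by
    rw [Real.one_lt_rpow_iff_of_pos hτ0]; exact Or.inl ⟨hτ1', hk0⟩
  have hτkey : lam * (τ ^ k - 1) < C * lam * k * (τ - 1) := by
    rw [div_lt_iff₀ (by linarith : (0:ℝ) < τ - 1)] at hτs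
    nlinarith
  -- choose η
  set η₁ : ℝ := (C * lam * k * (τ - 1) - lam * (τ ^ k - 1)) / (τ ^ k + 1) with hη₁def
  set η₂ : ℝ := lam * (C - 1) / C with hη₂def
  set η₃ : ℝ := lam * (C * k - 1) with hη₃def
  have hη₁pos : 0 < η₁ := by
    apply div_pos (by linarith) (by linarith)
  have hη₂pos : 0 < η₂ := by apply div_pos (by nlinarith) hC0
  have hη₃pos : 0 < η₃ := by
    rw [hη₃def]
    have h1 : 1 < C * k := by nlinarith
    exact mul_pos hlam (by linarith)
  set η : ℝ := min η₁ (min η₂ η₃) / 2 with hηdef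
  have hη : 0 < η := by
    apply div_pos _ two_pos
    exact lt_min hη₁pos (lt_min hη₂pos hη₃pos)
  have hηle1 : η ≤ η₁ := by
    have h := min_le_left η₁ (min η₂ η₃)
    have : 0 < min η₁ (min η₂ η₃) := lt_min hη₁pos (lt_min hη₂pos hη₃pos)
    rw [hηdef]; linarith
  have hηlt2 : η < η₂ := by
    have h := min_le_right η₁ (min η₂ η₃)
    have h2 := min_le_left η₂ η₃
    rw [hηdef]; linarith [lt_min hη₁pos (lt_min hη₂pos hη₃pos)]
  have hηlt3 : η < η₃ := by
    have h := min_le_right η₁ (min η₂ η₃)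
    have h2 := min_le_right η₂ η₃
    rw [hηdef]; linarith [lt_min hη₁pos (lt_min hη₂pos hη₃pos)]
  have hη1 : (lam + η) * τ ^ k - (lam - η) ≤ C * lam * k * (τ - 1) := by
    have : η * (τ ^ k + 1) ≤ C * lam * k * (τ - 1) - lam * (τ ^ k - 1) := by
      rw [hη₁def] at hηle1
      rw [← le_div_iff₀ (by linarith : (0:ℝ) < τ ^ k + 1)]
      exact hηle1
    nlinarith
  have hη2 : lam < (lam - η) * C := by
    rw [hη₂def] at hηlt2
    rw [lt_div_iff₀ hC0] at hηlt2
    nlinarith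
  have hη3 : lam + η < C * lam * k := by rw [hη₃def] at hηlt3; nlinarith
  have hηlam : η < lam := by nlinarith
  clear_value η
  clear hηdef hη₁pos hη₂pos hη₃pos hηle1 hηlt2 hηlt3 hη₁def hη₂def hη₃def
  clear η₁ η₂ η₃
  clear hτs hτkey hderiv hslope hlt hmem
  -- extract δ₁ from growth
  have hg := Metric.tendsto_nhds.mp hgrowth η hη
  rw [eventually_nhdsWithin_iff, Metric.eventually_nhds_iff] at hg
  obtain ⟨δ₁, hδ₁, hg⟩ := hg
  have hgb : ∀ δ : ℝ, 0 < δ → δ < δ₁ →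
      (lam - η) * δ ^ k ≤ f (xr + δ) - f xr ∧ f (xr + δ) - f xr ≤ (lam + η) * δ ^ k := by
    intro δ h0 h1
    have hd : dist δ 0 < δ₁ := by rw [Real.dist_eq, sub_zero, abs_of_pos h0]; exact h1
    have h3 := hg hd h0
    rw [Real.dist_eq, sub_zero, abs_lt] at h3
    have hpk : 0 < δ ^ k := Real.rpow_pos_of_pos h0 k
    obtain ⟨hl, hr⟩ := h3
    rw [div_lt_iff₀ hpk] at hr
    rw [lt_div_iff₀ hpk] at hl
    constructor <;> nlinarith [hl, hr, hpk]
  -- ε₀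
  have hp0 : (0:ℝ) < δ₁ / τ := div_pos hδ₁ hτ0
  refine ⟨lam / C * (δ₁ / τ) ^ (k - 1), by positivity, fun ε hε => ?_⟩
  obtain ⟨hε0, hεlt⟩ := hε
  set d : ℝ := (ε / (C * lam * k)) ^ (1 / (k - 1)) with hddef
  set b : ℝ := (C * ε / lam) ^ (1 / (k - 1)) with hbdef
  have hbase1 : 0 < ε / (C * lam * k) := by positivity
  have hbase2 : 0 < C * ε / lam := by positivity
  have hd0 : 0 < d := Real.rpow_pos_of_pos hbase1 _
  have hb0 : 0 < b := Real.rpow_pos_of_pos hbase2 _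
  have hpow : ∀ a : ℝ, 0 < a → (a ^ (1 / (k - 1))) ^ (k - 1) = a := fun a ha => by
    rw [← Real.rpow_mul ha.le, one_div, inv_mul_cancel₀ (ne_of_gt hk1), Real.rpow_one]
  have hpow' : ∀ a : ℝ, 0 < a → (a ^ (k - 1)) ^ (1 / (k - 1)) = a := fun a ha => by
    rw [← Real.rpow_mul ha.le, one_div, mul_inv_cancel₀ (ne_of_gt hk1), Real.rpow_one]
  have hdk : d ^ (k - 1) = ε / (C * lam * k) := hpow _ hbase1
  have hbk : b ^ (k - 1) = C * ε / lam := hpow _ hbase2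
  have hdb : d ≤ b := by
    apply Real.rpow_le_rpow hbase1.le _ (le_of_lt (one_div_pos.mpr hk1))
    rw [div_le_div_iff₀ (by positivity) hlam]
    have h1 : 1 ≤ C * C * k := by nlinarith
    have h2 : ε * lam * 1 ≤ ε * lam * (C * C * k) :=
      mul_le_mul_of_nonneg_left h1 (le_of_lt (mul_pos hε0 hlam))
    nlinarith [h2]
  have hbp : b < δ₁ / τ := by
    have h1 : C * ε / lam < (δ₁ / τ) ^ (k - 1) := by
      rw [div_lt_iff₀ hlam]
      calc C * ε = ε * C := by ring
        _ < lam / C * (δ₁ / τ) ^ (k - 1) * C := mul_lt_mul_of_pos_right hεlt hC0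
        _ = (δ₁ / τ) ^ (k - 1) * lam := by field_simp
    calc b < ((δ₁ / τ) ^ (k - 1)) ^ (1 / (k - 1)) :=
          Real.rpow_lt_rpow hbase2.le h1 (one_div_pos.mpr hk1)
      _ = δ₁ / τ := hpow' _ hp0
  have hbδ : b < δ₁ := lt_trans hbp (div_lt_self hδ₁ hτ1')
  have hdδ : d < δ₁ := lt_of_le_of_lt hdb hbδ
  have hτbδ : τ * b < δ₁ := by
    rw [lt_div_iff₀ hτ0] at hbp; linarith [hbp]
  clear_value d b
  clear hddef hbdef hpow hpow'
  -- rpow splitting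
  have hsplit : ∀ a : ℝ, 0 < a → a ^ k = a ^ (k - 1) * a := fun a ha => by
    have h : a ^ k = a ^ ((k - 1) + 1) := by norm_num
    rw [h, Real.rpow_add ha, Real.rpow_one]
  -- upper bound for elements
  have hub : ∀ x ∈ subderivE (fstarE f) ε, x ≤ xr + b := by
    intro x hx
    rw [mem_subderiv_iff f hconv] at hx
    by_contra hcon
    push_neg at hcon
    have h1 : f x - f xr ≤ ε * (x - xr) := by have := hx xr; nlinarith
    have hxxr : xr < x := by linarith
    have hsec := hconv.secant_mono (mem_univ xr) (mem_univ (xr + b)) (mem_univ x)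
      (by intro h; linarith [hb0]) (ne_of_gt hxxr) hcon.le
    rw [add_sub_cancel_left] at hsec
    have hlow := (hgb b hb0 hbδ).1
    have h2 : (f (xr + b) - f xr) / b ≤ ε := by
      apply le_trans hsec
      rw [div_le_iff₀ (by linarith : (0:ℝ) < x - xr)]
      linarith
    rw [div_le_iff₀ hb0] at h2
    rw [hsplit b hb0, hbk] at hlow
    have hεb : 0 < ε * b := mul_pos hε0 hb0
    have hthis : (lam - η) * C / lam * (ε * b) ≤ 1 * (ε * b) := by
      have h5 : (lam - η) * (C * ε / lam * b) = (lam - η) * C / lam * (ε * b) := by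
        field_simp
      have h6 := le_trans hlow h2
      rw [h5] at h6
      linarith [h6]
    have h4 : (lam - η) * C / lam ≤ 1 := le_of_mul_le_mul_right hthis hεb
    rw [div_le_one hlam] at h4
    linarith [hη2]
  -- lower bound for elements
  have hlb : ∀ x ∈ subderivE (fstarE f) ε, xr + d ≤ x := by
    intro x hx
    rw [mem_subderiv_iff f hconv] at hx
    by_contra hcon
    push_neg at hcon
    have hxr_le : xr ≤ x := by
      by_contra h
      push_neg at h
      have h1 := hx xr
      have h2 := hfmin x
      nlinarith
    rcases eq_or_lt_of_le hxr_le with heq | hltx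
    · -- x = xr
      have hy := hx (xr + d)
      have hup := (hgb d hd0 hdδ).2
      rw [← heq] at hy
      have h1 : ε * d ≤ (lam + η) * d ^ k := by
        have := hfmin (xr + d)
        nlinarith
      rw [hsplit d hd0, hdk] at h1
      have hq : (lam + η) * (ε / (C * lam * k)) < ε := by
        rw [mul_div_assoc', div_lt_iff₀ (by positivity : (0:ℝ) < C * lam * k)]
        nlinarith [mul_lt_mul_of_pos_right hη3 hε0]
      nlinarith [h1, mul_lt_mul_of_pos_right hq hd0]
    · -- xr < x < xr + d
      obtain ⟨u, hu_eq⟩ : ∃ u, x = xr + u := ⟨x - xr, by ring⟩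
      subst hu_eq
      have hu0 : 0 < u := by linarith
      have hud : u < d := by linarith
      have huδ : u < δ₁ := lt_trans hud hdδ
      have hτuδ : τ * u < δ₁ := by
        have : τ * u < τ * b := by
          apply mul_lt_mul_of_pos_left (lt_of_lt_of_le hud hdb) hτ0
        linarith
      have hτu0 : 0 < τ * u := by positivity
      have hlow := (hgb u hu0 huδ).1
      have hup := (hgb (τ * u) hτu0 hτuδ).2
      have hy := hx (xr + τ * u)
      have h1 : ε * ((τ - 1) * u) ≤ (lam + η) * (τ * u) ^ k - (lam - η) * u ^ k := by
        linarith [hy, hlow, hup]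
      rw [Real.mul_rpow hτ0.le hu0.le] at h1
      have hcoef : 0 < (lam + η) * τ ^ k - (lam - η) := by
        nlinarith [mul_lt_mul_of_pos_left hτk1 (by linarith : (0:ℝ) < lam + η)]
      have huk : u ^ (k - 1) < ε / (C * lam * k) := by
        rw [← hdk]
        exact Real.rpow_lt_rpow hu0.le hud hk1
      have h2 : ((lam + η) * τ ^ k - (lam - η)) * u ^ k
          < ((lam + η) * τ ^ k - (lam - η)) * (ε / (C * lam * k)) * u := by
        rw [hsplit u hu0]
        nlinarith [mul_lt_mul_of_pos_right (mul_lt_mul_of_pos_left huk hcoef) hu0]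
      have h3 : ((lam + η) * τ ^ k - (lam - η)) * (ε / (C * lam * k))
          ≤ C * lam * k * (τ - 1) * (ε / (C * lam * k)) := by
        apply mul_le_mul_of_nonneg_right _ (by positivity)
        nlinarith [hη1]
      have h4 : C * lam * k * (τ - 1) * (ε / (C * lam * k)) * u = ε * (τ - 1) * u := by
        field_simp
      linarith [h1, h2, mul_le_mul_of_nonneg_right h3 hu0.le, h4]
  -- nonemptiness
  have hne : (subderivE (fstarE f) ε).Nonempty := by
    set p : ℝ := δ₁ / τ with hpdef
    have hpδ : p < δ₁ := div_lt_self hδ₁ hτ1'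
    have hplow := (hgb p hp0 hpδ).1
    clear_value p
    have hεp : ε < (lam - η) * p ^ (k - 1) := by
      have h1 : lam / C * p ^ (k - 1) < (lam - η) * p ^ (k - 1) := by
        apply mul_lt_mul_of_pos_right _ (Real.rpow_pos_of_pos hp0 _)
        rw [div_lt_iff₀ hC0]
        linarith [hη2]
      linarith
    have hM : ε * p < f (xr + p) - f xr := by
      have heq : (lam - η) * p ^ k = (lam - η) * p ^ (k - 1) * p := by
        rw [hsplit p hp0]; ring
      linarith [heq, hplow, mul_lt_mul_of_pos_right hεp hp0]
    have hcont : Continuous f := hconv.locallyLipschitz.continuous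
    set g : ℝ → ℝ := fun t => f t - ε * t with hgdef
    clear_value g
    have hgc : ContinuousOn g (Icc xr (xr + p)) := by
      rw [hgdef]
      exact ((hcont.sub (continuous_const.mul continuous_id)).continuousOn)
    obtain ⟨m, hm_mem, hm_min⟩ := isCompact_Icc.exists_isMinOn
      (nonempty_Icc.mpr (by linarith)) hgc
    refine ⟨m, (mem_subderiv_iff f hconv ε m).mpr ?_⟩
    intro y
    have hxr_mem : xr ∈ Icc xr (xr + p) := ⟨le_refl xr, by linarith⟩
    have hgm_xr : g m ≤ g xr := hm_min hxr_mem
    have key : g m ≤ g y := by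
      rcases le_or_gt y xr with h1 | h1
      · have h3 : g xr ≤ g y := by
          rw [hgdef]
          have h6 : ε * y ≤ ε * xr := mul_le_mul_of_nonneg_left h1 hε0.le
          have h7 := hfmin y
          simp only []
          linarith [h6, h7]
        linarith [hgm_xr, h3]
      rcases le_or_gt y (xr + p) with h2 | h2
      · exact hm_min ⟨h1.le, h2⟩
      · have hsec := hconv.secant_mono (mem_univ xr) (mem_univ (xr + p)) (mem_univ y)
          (by intro h; linarith [hp0]) (by intro h; linarith [h1]) h2.le
        rw [add_sub_cancel_left] at hsec
        have hεs : ε < (f y - f xr) / (y - xr) := by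
          refine lt_of_lt_of_le ?_ hsec
          rw [lt_div_iff₀ hp0]
          linarith [hM]
        rw [lt_div_iff₀ (by linarith : (0:ℝ) < y - xr)] at hεs
        have h4 : ε * (y - xr) ≤ f y - f xr := hεs.le
        have h5 : g xr ≤ g y := by
          rw [hgdef]
          simp only []
          linarith [h4]
        linarith [hgm_xr, h5]
    rw [hgdef] at key
    simp only [] at key
    linarith [key]
  -- assemble
  have hbddb : BddBelow (subderivE (fstarE f) ε) := ⟨xr + d, fun x hx => hlb x hx⟩
  have hbdda : BddAbove (subderivE (fstarE f) ε) := ⟨xr + b, fun x hx => hub x hx⟩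
  exact ⟨le_csInf hne (fun x hx => hlb x hx), csInf_le_csSup hne hbddb hbdda,
    csSup_le hne (fun x hx => hub x hx)⟩
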